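/- arXiv:2105.07563 — 2 statements merged into one kernel-verified Lean document; each statement's English description precedes it below -/
import Mathlib

section
/- Let u = ε + Zv with ε, v independent, E[ε]=0, Cov(ε)=R_e, E[v]=0, Cov(v)=R_v, with standardized fourth moments E[((R_e^{-1/2}ε)_i)^4]=K_e+3 and E[((R_v^{-1/2}v)_i)^4]=K_v+3, and the coordinates of R_e^{-1/2}ε independent and the coordinates of R_v^{-1/2}v independent. Then for symmetric N×N matrices C, D, with Σ = R_e + Z R_v Zᵀ: E[(uᵀCu)(uᵀDu)] = 2 tr(CΣDΣ) + tr(CΣ) tr(DΣ) + K_e h_e(C,D) + K_v h_v(C,D), where h_e(C,D) = ∑_{i=1}^N (R_e^{1/2} C R_e^{1/2})_{ii}(R_e^{1/2} D R_e^{1/2})_{ii} and h_v(C,D) = ∑_{i=1}^m (R_v^{1/2} Zᵀ C Z R_v^{1/2})_{ii}(R_v^{1/2} Zᵀ D Z R_v^{1/2})_{ii}. -/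
open MeasureTheory ProbabilityTheory Matrix

section Helpers

variable {Ω : Type*} [MeasurableSpace Ω] {μ : Measure Ω} [IsProbabilityMeasure μ]

lemma amgm4 (a b c d : ℝ) : |a * b * c * d| ≤ (a ^ 4 + b ^ 4 + c ^ 4 + d ^ 4) / 4 := by
  rw [abs_le]
  constructor
  · nlinarith [sq_nonneg (a * b + c * d), sq_nonneg (a ^ 2 - b ^ 2), sq_nonneg (c ^ 2 - d ^ 2),
      sq_nonneg (a * b - c * d), sq_nonneg (a ^ 2 + b ^ 2), sq_nonneg (c ^ 2 + d ^ 2)]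
  · nlinarith [sq_nonneg (a * b - c * d), sq_nonneg (a ^ 2 - b ^ 2), sq_nonneg (c ^ 2 - d ^ 2),
      sq_nonneg (a * b + c * d), sq_nonneg (a ^ 2 + b ^ 2), sq_nonneg (c ^ 2 + d ^ 2)]

lemma integrable_mul4 {f g h k : Ω → ℝ} (hfm : Measurable f) (hgm : Measurable g)
    (hhm : Measurable h) (hkm : Measurable k)
    (hf : Integrable (fun ω => f ω ^ 4) μ) (hg : Integrable (fun ω => g ω ^ 4) μ)
    (hh : Integrable (fun ω => h ω ^ 4) μ) (hk : Integrable (fun ω => k ω ^ 4) μ) :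
    Integrable (fun ω => f ω * g ω * h ω * k ω) μ := by
  have hbound : Integrable (fun ω => (f ω ^ 4 + g ω ^ 4 + h ω ^ 4 + k ω ^ 4) / 4) μ :=
    (((hf.add hg).add hh).add hk).div_const 4
  refine hbound.mono' ((((hfm.mul hgm).mul hhm).mul hkm)).aestronglyMeasurable ?_
  filter_upwards with ω
  show ‖f ω * g ω * h ω * k ω‖ ≤ _
  rw [Real.norm_eq_abs]
  exact amgm4 (f ω) (g ω) (h ω) (k ω)

end Helpers

section Moments

variable {Ω : Type*} [MeasurableSpace Ω] {μ : Measure Ω} [IsProbabilityMeasure μ]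
variable {ι : Type*} [DecidableEq ι] {y : ι → Ω → ℝ}
variable (hmeas : ∀ i, Measurable (y i))
variable (hindep : iIndepFun y μ)
variable (hint : ∀ i, Integrable (fun ω => y i ω ^ 4) μ)
variable (hm1 : ∀ i, ∫ ω, y i ω ∂μ = 0)
variable (hm2 : ∀ i, ∫ ω, y i ω ^ 2 ∂μ = 1)

include hmeas hint in
lemma int_prod4 (a b c d : ι) :
    Integrable (fun ω => y a ω * y b ω * y c ω * y d ω) μ :=
  integrable_mul4 (hmeas a) (hmeas b) (hmeas c) (hmeas d) (hint a) (hint b) (hint c) (hint d)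

include hmeas hint in
lemma int_prod3 (a b c : ι) :
    Integrable (fun ω => y a ω * y b ω * y c ω) μ := by
  have := integrable_mul4 (μ := μ) (hmeas a) (hmeas b) (hmeas c) measurable_const
    (hint a) (hint b) (hint c) (k := fun _ => (1:ℝ)) (by simpa using integrable_const (μ := μ) (1:ℝ))
  simpa using this

include hmeas hindep hint hm1 in
lemma E_single {a b c d : ι} (hda : d ≠ a) (hdb : d ≠ b) (hdc : d ≠ c) :
    ∫ ω, y a ω * y b ω * y c ω * y d ω ∂μ = 0 := by
  classical
  have hdisj : Disjoint ({a, b, c} : Finset ι) {d} := by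
    simp only [Finset.disjoint_right, Finset.mem_singleton, Finset.mem_insert]
    rintro x rfl
    simp [hda, hdb, hdc]
  have hbig := hindep.indepFun_finset {a, b, c} {d} hdisj hmeas
  have ha : a ∈ ({a, b, c} : Finset ι) := by simp
  have hb : b ∈ ({a, b, c} : Finset ι) := by simp
  have hc : c ∈ ({a, b, c} : Finset ι) := by simp
  have hd : d ∈ ({d} : Finset ι) := by simp
  have hφ : Measurable (fun v : (({a, b, c} : Finset ι) → ℝ) => v ⟨a, ha⟩ * v ⟨b, hb⟩ * v ⟨c, hc⟩) :=
    by fun_prop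
  have hψ : Measurable (fun v : (({d} : Finset ι) → ℝ) => v ⟨d, hd⟩) := by fun_prop
  have hI : IndepFun (fun ω => y a ω * y b ω * y c ω) (y d) μ := hbig.comp hφ hψ
  have h1 : Integrable (fun ω => y a ω * y b ω * y c ω) μ := int_prod3 hmeas hint a b c
  have := hI.integral_mul_eq_mul_integral h1.aestronglyMeasurable (hmeas d).aestronglyMeasurable
  calc ∫ ω, y a ω * y b ω * y c ω * y d ω ∂μ
      = ∫ ω, ((fun ω => y a ω * y b ω * y c ω) * y d) ω ∂μ := rfl
    _ = (∫ ω, y a ω * y b ω * y c ω ∂μ) * ∫ ω, y d ω ∂μ := this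
    _ = 0 := by rw [hm1 d, mul_zero]

include hmeas hindep hm2 in
lemma E_pair {a b : ι} (hab : a ≠ b) :
    ∫ ω, y a ω ^ 2 * y b ω ^ 2 ∂μ = 1 := by
  have hI : IndepFun (fun ω => y a ω ^ 2) (fun ω => y b ω ^ 2) μ :=
    (hindep.indepFun hab).comp (measurable_id.pow_const 2) (measurable_id.pow_const 2)
  have := hI.integral_mul_eq_mul_integral ((hmeas a).pow_const 2).aestronglyMeasurable
    ((hmeas b).pow_const 2).aestronglyMeasurable
  calc ∫ ω, y a ω ^ 2 * y b ω ^ 2 ∂μ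
      = ∫ ω, ((fun ω => y a ω ^ 2) * fun ω => y b ω ^ 2) ω ∂μ := rfl
    _ = (∫ ω, y a ω ^ 2 ∂μ) * ∫ ω, y b ω ^ 2 ∂μ := this
    _ = 1 := by rw [hm2 a, hm2 b, mul_one]

end Moments

section Moments2

variable {Ω : Type*} [MeasurableSpace Ω] {μ : Measure Ω} [IsProbabilityMeasure μ]
variable {ι : Type*} [DecidableEq ι] {y : ι → Ω → ℝ}
variable (hmeas : ∀ i, Measurable (y i))
variable (hindep : iIndepFun y μ)
variable (hint : ∀ i, Integrable (fun ω => y i ω ^ 4) μ)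
variable (hm1 : ∀ i, ∫ ω, y i ω ∂μ = 0)
variable (hm2 : ∀ i, ∫ ω, y i ω ^ 2 ∂μ = 1)

include hmeas hindep hint hm1 hm2 in
lemma E4 (i j k l : ι) :
    ∫ ω, y i ω * y j ω * y k ω * y l ω ∂μ =
      (if i = j then (1:ℝ) else 0) * (if k = l then 1 else 0)
      + (if i = k then (1:ℝ) else 0) * (if j = l then 1 else 0)
      + (if i = l then (1:ℝ) else 0) * (if j = k then 1 else 0)
      + (if i = j ∧ i = k ∧ i = l then (∫ ω, y i ω ^ 4 ∂μ) - 3 else 0) := by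
  by_cases hij : i = j
  · subst hij
    by_cases hik : i = k
    · subst hik
      by_cases hil : i = l
      · subst hil
        simp only [if_pos rfl, and_self]
        rw [show (fun ω => y i ω * y i ω * y i ω * y i ω) = (fun ω => y i ω ^ 4)
          from funext fun ω => by ring]
        norm_num
      · rw [E_single hmeas hindep hint hm1 (Ne.symm hil) (Ne.symm hil) (Ne.symm hil)]
        simp [hil]
    · by_cases hil : i = l
      · subst hil
        rw [show (fun ω => y i ω * y i ω * y k ω * y i ω)
            = (fun ω => y i ω * y i ω * y i ω * y k ω) from funext fun ω => by ring,
          E_single hmeas hindep hint hm1 (Ne.symm hik) (Ne.symm hik) (Ne.symm hik)]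
        simp [hik, Ne.symm hik]
      · by_cases hkl : k = l
        · subst hkl
          rw [show (fun ω => y i ω * y i ω * y k ω * y k ω)
              = (fun ω => y i ω ^ 2 * y k ω ^ 2) from funext fun ω => by ring,
            E_pair hmeas hindep hm2 hik]
          simp [hik]
        · rw [E_single hmeas hindep hint hm1 (Ne.symm hil) (Ne.symm hil)
            (fun h => hkl h.symm)]
          simp [hik, hil, hkl]
  · by_cases hik : i = k
    · subst hik
      by_cases hjl : j = l
      · subst hjl
        rw [show (fun ω => y i ω * y j ω * y i ω * y j ω)
            = (fun ω => y i ω ^ 2 * y j ω ^ 2) from funext fun ω => by ring,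
          E_pair hmeas hindep hm2 hij]
        simp [hij]
      · rw [show (fun ω => y i ω * y j ω * y i ω * y l ω)
            = (fun ω => y i ω * y i ω * y l ω * y j ω) from funext fun ω => by ring,
          E_single hmeas hindep hint hm1 (Ne.symm hij) (Ne.symm hij) hjl]
        simp [hij, hjl, Ne.symm hij]
    · by_cases hil : i = l
      · subst hil
        by_cases hjk : j = k
        · subst hjk
          rw [show (fun ω => y i ω * y j ω * y j ω * y i ω)
              = (fun ω => y i ω ^ 2 * y j ω ^ 2) from funext fun ω => by ring,
            E_pair hmeas hindep hm2 hij]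
          simp [hij, Ne.symm hij]
        · rw [show (fun ω => y i ω * y j ω * y k ω * y i ω)
              = (fun ω => y i ω * y j ω * y i ω * y k ω) from funext fun ω => by ring,
            E_single hmeas hindep hint hm1 (Ne.symm hik) (fun h => hjk h.symm) (Ne.symm hik)]
          simp [hij, hik, hjk, Ne.symm hik]
      · rw [show (fun ω => y i ω * y j ω * y k ω * y l ω)
            = (fun ω => y j ω * y k ω * y l ω * y i ω) from funext fun ω => by ring,
          E_single hmeas hindep hint hm1 hij hik hil]
        simp [hij, hik, hil]

end Moments2

section Master

variable {Ω : Type*} [MeasurableSpace Ω] {μ : Measure Ω} [IsProbabilityMeasure μ]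
variable {ι : Type*} [DecidableEq ι] [Fintype ι] {y : ι → Ω → ℝ}
variable (hmeas : ∀ i, Measurable (y i))
variable (hindep : iIndepFun y μ)
variable (hint : ∀ i, Integrable (fun ω => y i ω ^ 4) μ)
variable (hm1 : ∀ i, ∫ ω, y i ω ∂μ = 0)
variable (hm2 : ∀ i, ∫ ω, y i ω ^ 2 ∂μ = 1)

include hmeas hindep hint hm1 hm2 in
lemma master (A B : ι → ι → ℝ) :
    ∫ ω, (∑ i, ∑ j, A i j * (y i ω * y j ω)) * (∑ k, ∑ l, B k l * (y k ω * y l ω)) ∂μ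
      = (∑ i, A i i) * (∑ k, B k k) + (∑ i, ∑ j, A i j * B i j)
        + (∑ i, ∑ j, A i j * B j i)
        + ∑ i, A i i * B i i * ((∫ ω, y i ω ^ 4 ∂μ) - 3) := by
  have hpt : ∀ ω, (∑ i, ∑ j, A i j * (y i ω * y j ω)) * (∑ k, ∑ l, B k l * (y k ω * y l ω))
      = ∑ p : (ι × ι) × ι × ι, (A p.1.1 p.1.2 * B p.2.1 p.2.2) *
          (y p.1.1 ω * y p.1.2 ω * y p.2.1 ω * y p.2.2 ω) := by
    intro ω
    have e1 : (∑ i, ∑ j, A i j * (y i ω * y j ω))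
        = ∑ q : ι × ι, A q.1 q.2 * (y q.1 ω * y q.2 ω) := by
      simp [Fintype.sum_prod_type]
    have e2 : (∑ k, ∑ l, B k l * (y k ω * y l ω))
        = ∑ r : ι × ι, B r.1 r.2 * (y r.1 ω * y r.2 ω) := by
      simp [Fintype.sum_prod_type]
    rw [e1, e2, Finset.sum_mul_sum]
    rw [Fintype.sum_prod_type (f := fun p : (ι × ι) × ι × ι =>
      (A p.1.1 p.1.2 * B p.2.1 p.2.2) * (y p.1.1 ω * y p.1.2 ω * y p.2.1 ω * y p.2.2 ω))]
    refine Finset.sum_congr rfl fun q _ => Finset.sum_congr rfl fun r _ => ?_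
    ring
  rw [show (fun ω => (∑ i, ∑ j, A i j * (y i ω * y j ω)) * (∑ k, ∑ l, B k l * (y k ω * y l ω)))
      = fun ω => ∑ p : (ι × ι) × ι × ι, (A p.1.1 p.1.2 * B p.2.1 p.2.2) *
          (y p.1.1 ω * y p.1.2 ω * y p.2.1 ω * y p.2.2 ω) from funext hpt]
  rw [integral_finset_sum _ fun p _ =>
    (int_prod4 hmeas hint p.1.1 p.1.2 p.2.1 p.2.2).const_mul _]
  have : ∀ p : (ι × ι) × ι × ι,
      ∫ ω, (A p.1.1 p.1.2 * B p.2.1 p.2.2) *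
          (y p.1.1 ω * y p.1.2 ω * y p.2.1 ω * y p.2.2 ω) ∂μ
      = (A p.1.1 p.1.2 * B p.2.1 p.2.2) *
        ((if p.1.1 = p.1.2 then (1:ℝ) else 0) * (if p.2.1 = p.2.2 then 1 else 0)
        + (if p.1.1 = p.2.1 then (1:ℝ) else 0) * (if p.1.2 = p.2.2 then 1 else 0)
        + (if p.1.1 = p.2.2 then (1:ℝ) else 0) * (if p.1.2 = p.2.1 then 1 else 0)
        + (if p.1.1 = p.1.2 ∧ p.1.1 = p.2.1 ∧ p.1.1 = p.2.2 then
            (∫ ω, y p.1.1 ω ^ 4 ∂μ) - 3 else 0)) := by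
    intro p
    rw [integral_const_mul, E4 hmeas hindep hint hm1 hm2]
  rw [Finset.sum_congr rfl fun p _ => this p]
  simp only [Fintype.sum_prod_type]
  simp only [mul_add, Finset.sum_add_distrib, ite_and, mul_ite, ite_mul, mul_one, one_mul,
    mul_zero, zero_mul, Finset.sum_ite_eq, Finset.sum_ite_eq', Finset.mem_univ, if_true,
    Finset.sum_const_zero, add_zero, zero_add, Finset.sum_ite_irrel]
  rw [Finset.sum_mul_sum]

end Master

section Combine

variable {Ω : Type*} [MeasurableSpace Ω] {μ : Measure Ω} [IsProbabilityMeasure μ]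

lemma iIndepFun_sumElim {ι κ : Type*} {f : ι → Ω → ℝ} {g : κ → Ω → ℝ}
    (hf : iIndepFun f μ)
    (hg : iIndepFun g μ)
    (hfm : ∀ i, Measurable (f i)) (hgm : ∀ j, Measurable (g j))
    (hfg : IndepFun (fun ω i => f i ω) (fun ω j => g j ω) μ) :
    iIndepFun (Sum.elim f g) μ := by
  classical
  rw [iIndepFun_iff_measure_inter_preimage_eq_mul]
  intro S sets hsets
  -- split the intersection into left and right parts
  have hS : S = S.toLeft.disjSum S.toRight := (Finset.toLeft_disjSum_toRight).symm
  set sL : Set (ι → ℝ) := ⋂ a ∈ S.toLeft, (fun v : ι → ℝ => v a) ⁻¹' sets (Sum.inl a) with hsL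
  set sR : Set (κ → ℝ) := ⋂ b ∈ S.toRight, (fun v : κ → ℝ => v b) ⁻¹' sets (Sum.inr b) with hsR
  have hmL : MeasurableSet sL := by
    refine MeasurableSet.biInter (Finset.countable_toSet _) fun a ha => ?_
    exact measurable_pi_apply a (hsets _ (Finset.mem_toLeft.mp ha))
  have hmR : MeasurableSet sR := by
    refine MeasurableSet.biInter (Finset.countable_toSet _) fun b hb => ?_
    exact measurable_pi_apply b (hsets _ (Finset.mem_toRight.mp hb))
  have hsplit : (⋂ i ∈ S, Sum.elim f g i ⁻¹' sets i)
      = ((fun ω i => f i ω) ⁻¹' sL) ∩ ((fun ω j => g j ω) ⁻¹' sR) := by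
    ext ω
    simp only [Set.mem_iInter, Set.mem_inter_iff, Set.mem_preimage, hsL, hsR,
      Finset.mem_toLeft, Finset.mem_toRight]
    constructor
    · intro h
      exact ⟨fun a ha => h (Sum.inl a) ha, fun b hb => h (Sum.inr b) hb⟩
    · rintro ⟨h1, h2⟩ i hi
      cases i with
      | inl a => exact h1 a hi
      | inr b => exact h2 b hi
  have hL : μ ((fun ω i => f i ω) ⁻¹' sL) = ∏ a ∈ S.toLeft, μ (f a ⁻¹' sets (Sum.inl a)) := by
    have : ((fun ω i => f i ω) ⁻¹' sL) = ⋂ a ∈ S.toLeft, f a ⁻¹' sets (Sum.inl a) := by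
      ext ω; simp [hsL]
    rw [this]
    exact hf.measure_inter_preimage_eq_mul S.toLeft fun a ha => hsets _ (by simpa using ha)
  have hR : μ ((fun ω j => g j ω) ⁻¹' sR) = ∏ b ∈ S.toRight, μ (g b ⁻¹' sets (Sum.inr b)) := by
    have : ((fun ω j => g j ω) ⁻¹' sR) = ⋂ b ∈ S.toRight, g b ⁻¹' sets (Sum.inr b) := by
      ext ω; simp [hsR]
    rw [this]
    exact hg.measure_inter_preimage_eq_mul S.toRight fun b hb => hsets _ (by simpa using hb)
  rw [hsplit, hfg.measure_inter_preimage_eq_mul _ _ hmL hmR, hL, hR]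
  conv_rhs => rw [hS]
  rw [Finset.prod_disjSum]
  simp

end Combine

lemma measurable_mulVec' {n p : Type*} [Fintype p] (M : Matrix n p ℝ) :
    Measurable fun t : p → ℝ => M *ᵥ t := by
  refine measurable_pi_lambda _ fun i => ?_
  simp only [Matrix.mulVec, dotProduct]
  exact Finset.measurable_sum Finset.univ fun j _ => by fun_prop

/-- Let `u = ε + Z v` with `ε`, `v` independent, mean zero, covariances
`Rₑ`, `Rᵥ`, and standardized coordinates `x = Rₑ^{-1/2} ε`, `w = Rᵥ^{-1/2} v` each with
independent coordinates of mean `0`, variance `1` and fourth moments `Kₑ + 3`, `Kᵥ + 3`.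
Then for symmetric `C`, `D` and `Σ = Rₑ + Z Rᵥ Zᵀ`:
`E[(uᵀCu)(uᵀDu)] = 2 tr(CΣDΣ) + tr(CΣ) tr(DΣ) + Kₑ hₑ(C,D) + Kᵥ hᵥ(C,D)`. -/
theorem stmt3 {Ω : Type*} [MeasurableSpace Ω] (μ : Measure Ω) [IsProbabilityMeasure μ]
    {N m : ℕ} (ε : Ω → Fin N → ℝ) (v : Ω → Fin m → ℝ)
    (Z : Matrix (Fin N) (Fin m) ℝ)
    (Re Se : Matrix (Fin N) (Fin N) ℝ) (Rv Sv : Matrix (Fin m) (Fin m) ℝ)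
    (hRe : Re.PosDef) (hSe : Se.PosDef) (hSesymm : Se.IsSymm) (hSesq : Se * Se = Re)
    (hRv : Rv.PosDef) (hSv : Sv.PosDef) (hSvsymm : Sv.IsSymm) (hSvsq : Sv * Sv = Rv)
    (Ke Kv : ℝ)
    (x : Ω → Fin N → ℝ) (hx : ∀ ω, x ω = Se⁻¹ *ᵥ ε ω)
    (w : Ω → Fin m → ℝ) (hw : ∀ ω, w ω = Sv⁻¹ *ᵥ v ω)
    (hmeasx : ∀ i, Measurable fun ω => x ω i)
    (hmeasw : ∀ i, Measurable fun ω => w ω i)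
    (hindepεv : IndepFun ε v μ)
    (hindepx : iIndepFun (fun i ω => x ω i) μ)
    (hindepw : iIndepFun (fun i ω => w ω i) μ)
    (hintx : ∀ i, Integrable (fun ω => (x ω i) ^ 4) μ)
    (hintw : ∀ i, Integrable (fun ω => (w ω i) ^ 4) μ)
    (hx1 : ∀ i, ∫ ω, x ω i ∂μ = 0)
    (hx2 : ∀ i, ∫ ω, (x ω i) ^ 2 ∂μ = 1)
    (hx4 : ∀ i, ∫ ω, (x ω i) ^ 4 ∂μ = Ke + 3)
    (hw1 : ∀ i, ∫ ω, w ω i ∂μ = 0)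
    (hw2 : ∀ i, ∫ ω, (w ω i) ^ 2 ∂μ = 1)
    (hw4 : ∀ i, ∫ ω, (w ω i) ^ 4 ∂μ = Kv + 3)
    (u : Ω → Fin N → ℝ) (hu : ∀ ω, u ω = ε ω + Z *ᵥ v ω)
    (C D : Matrix (Fin N) (Fin N) ℝ) (hC : C.IsSymm) (hD : D.IsSymm)
    (Sig : Matrix (Fin N) (Fin N) ℝ) (hSig : Sig = Re + Z * Rv * Zᵀ) :
    ∫ ω, (u ω ⬝ᵥ C *ᵥ u ω) * (u ω ⬝ᵥ D *ᵥ u ω) ∂μ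
      = 2 * (C * Sig * D * Sig).trace + (C * Sig).trace * (D * Sig).trace
        + Ke * ∑ i, (Se * C * Se) i i * (Se * D * Se) i i
        + Kv * ∑ i, (Sv * Zᵀ * C * Z * Sv) i i * (Sv * Zᵀ * D * Z * Sv) i i := by
  classical
  set F : Matrix (Fin N) (Fin N ⊕ Fin m) ℝ := fromCols Se (Z * Sv) with hF
  set y : (Fin N ⊕ Fin m) → Ω → ℝ := fun i ω => Sum.elim (x ω) (w ω) i with hy
  -- invertibility facts
  have hSedet : IsUnit Se.det := isUnit_iff_ne_zero.mpr hSe.det_pos.ne'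
  have hSvdet : IsUnit Sv.det := isUnit_iff_ne_zero.mpr hSv.det_pos.ne'
  have hε : ∀ ω, ε ω = Se *ᵥ x ω := fun ω => by
    rw [hx ω, mulVec_mulVec, Matrix.mul_nonsing_inv _ hSedet, one_mulVec]
  have hv' : ∀ ω, v ω = Sv *ᵥ w ω := fun ω => by
    rw [hw ω, mulVec_mulVec, Matrix.mul_nonsing_inv _ hSvdet, one_mulVec]
  have huF : ∀ ω, u ω = F *ᵥ Sum.elim (x ω) (w ω) := by
    intro ω
    rw [hu ω, hε ω, hv' ω, hF, fromCols_mulVec_sumElim, mulVec_mulVec]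
  -- quadratic form identity
  have hquad : ∀ (M : Matrix (Fin N) (Fin N) ℝ) (t : Fin N ⊕ Fin m → ℝ),
      (F *ᵥ t) ⬝ᵥ M *ᵥ (F *ᵥ t) = ∑ i, ∑ j, (Fᵀ * M * F) i j * (t i * t j) := by
    intro M t
    rw [mulVec_mulVec, dotProduct_mulVec, ← vecMul_transpose, vecMul_vecMul,
      ← Matrix.mul_assoc]
    simp only [vecMul, dotProduct, Finset.sum_mul]
    rw [Finset.sum_comm]
    exact Finset.sum_congr rfl fun i _ => Finset.sum_congr rfl fun j _ => by ring
  -- properties of y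
  have hmeasy : ∀ i, Measurable (y i) := by
    rintro (a | b)
    · exact hmeasx a
    · exact hmeasw b
  have hindepy : iIndepFun y μ := by
    have hIF : IndepFun (fun ω i => x ω i) (fun ω j => w ω j) μ := by
      have h1 : (fun ω (i : Fin N) => x ω i) = (fun p => Se⁻¹ *ᵥ p) ∘ ε :=
        funext fun ω => hx ω
      have h2 : (fun ω (j : Fin m) => w ω j) = (fun p => Sv⁻¹ *ᵥ p) ∘ v :=
        funext fun ω => hw ω
      rw [h1, h2]
      exact hindepεv.comp (measurable_mulVec' _) (measurable_mulVec' _)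
    have : y = Sum.elim (fun a ω => x ω a) (fun b ω => w ω b) :=
      funext fun i => by cases i <;> rfl
    rw [this]
    exact iIndepFun_sumElim hindepx hindepw hmeasx hmeasw hIF
  have hinty : ∀ i, Integrable (fun ω => y i ω ^ 4) μ := by
    rintro (a | b)
    · exact hintx a
    · exact hintw b
  have hy1 : ∀ i, ∫ ω, y i ω ∂μ = 0 := by
    rintro (a | b)
    · exact hx1 a
    · exact hw1 b
  have hy2 : ∀ i, ∫ ω, y i ω ^ 2 ∂μ = 1 := by
    rintro (a | b)
    · exact hx2 a
    · exact hw2 b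
  have hy4 : ∀ i, (∫ ω, y i ω ^ 4 ∂μ) - 3 = Sum.elim (fun _ : Fin N => Ke) (fun _ : Fin m => Kv) i := by
    rintro (a | b)
    · rw [show (∫ ω, y (Sum.inl a) ω ^ 4 ∂μ) = ∫ ω, x ω a ^ 4 ∂μ from rfl, hx4 a,
        Sum.elim_inl]; ring
    · rw [show (∫ ω, y (Sum.inr b) ω ^ 4 ∂μ) = ∫ ω, w ω b ^ 4 ∂μ from rfl, hw4 b,
        Sum.elim_inr]; ring
  -- rewrite the integrand
  have hintegrand : ∀ ω, (u ω ⬝ᵥ C *ᵥ u ω) * (u ω ⬝ᵥ D *ᵥ u ω)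
      = (∑ i, ∑ j, (Fᵀ * C * F) i j * (y i ω * y j ω))
        * (∑ k, ∑ l, (Fᵀ * D * F) k l * (y k ω * y l ω)) := by
    intro ω
    rw [huF ω, hquad C _, hquad D _]
  simp only [hintegrand]
  rw [master hmeasy hindepy hinty hy1 hy2 (fun i j => (Fᵀ * C * F) i j)
    (fun i j => (Fᵀ * D * F) i j)]
  -- matrix algebra
  have hFFt : F * Fᵀ = Sig := by
    rw [hF, transpose_fromCols, fromCols_mul_fromRows, hSesymm.eq, hSesq,
      transpose_mul, hSvsymm.eq, hSig, ← hSvsq]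
    simp only [Matrix.mul_assoc]
  have htrA : (∑ i, (Fᵀ * C * F) i i) = (C * Sig).trace := by
    rw [show (∑ i, (Fᵀ * C * F) i i) = (Fᵀ * C * F).trace from rfl,
      Matrix.trace_mul_cycle, hFFt, Matrix.trace_mul_comm]
  have htrB : (∑ i, (Fᵀ * D * F) i i) = (D * Sig).trace := by
    rw [show (∑ i, (Fᵀ * D * F) i i) = (Fᵀ * D * F).trace from rfl,
      Matrix.trace_mul_cycle, hFFt, Matrix.trace_mul_comm]
  have hBsymm : ∀ i j, (Fᵀ * D * F) i j = (Fᵀ * D * F) j i := by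
    intro i j
    have : (Fᵀ * D * F).IsSymm := by
      rw [Matrix.IsSymm, transpose_mul, transpose_mul, transpose_transpose, hD.eq,
        Matrix.mul_assoc]
    exact this.apply j i
  have htrAB : (∑ i, ∑ j, (Fᵀ * C * F) i j * (Fᵀ * D * F) j i)
      = (C * Sig * D * Sig).trace := by
    have h1 : (∑ i, ∑ j, (Fᵀ * C * F) i j * (Fᵀ * D * F) j i)
        = ((Fᵀ * C * F) * (Fᵀ * D * F)).trace := by
      simp [Matrix.trace, Matrix.diag, Matrix.mul_apply]
    rw [h1]
    have h2 : (Fᵀ * C * F) * (Fᵀ * D * F) = Fᵀ * (C * Sig * D) * F := by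
      rw [← hFFt]
      simp only [Matrix.mul_assoc]
    rw [h2, Matrix.trace_mul_cycle, hFFt, Matrix.trace_mul_comm]
  have htrAB' : (∑ i, ∑ j, (Fᵀ * C * F) i j * (Fᵀ * D * F) i j)
      = (C * Sig * D * Sig).trace := by
    rw [← htrAB]
    exact Finset.sum_congr rfl fun i _ => Finset.sum_congr rfl fun j _ => by rw [hBsymm i j]
  -- block structure for diagonal terms
  have hCblock : Fᵀ * C * F = fromBlocks (Se * C * Se) (Se * C * (Z * Sv))
      ((Sv * Zᵀ) * C * Se) ((Sv * Zᵀ) * C * (Z * Sv)) := by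
    rw [hF, transpose_fromCols, fromRows_mul, fromRows_mul_fromCols, hSesymm.eq,
      transpose_mul, hSvsymm.eq]
  have hDblock : Fᵀ * D * F = fromBlocks (Se * D * Se) (Se * D * (Z * Sv))
      ((Sv * Zᵀ) * D * Se) ((Sv * Zᵀ) * D * (Z * Sv)) := by
    rw [hF, transpose_fromCols, fromRows_mul, fromRows_mul_fromCols, hSesymm.eq,
      transpose_mul, hSvsymm.eq]
  have hdiag : (∑ i : Fin N ⊕ Fin m, (Fᵀ * C * F) i i * (Fᵀ * D * F) i i
        * ((∫ ω, y i ω ^ 4 ∂μ) - 3))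
      = Ke * ∑ i, (Se * C * Se) i i * (Se * D * Se) i i
        + Kv * ∑ i, (Sv * Zᵀ * C * Z * Sv) i i * (Sv * Zᵀ * D * Z * Sv) i i := by
    simp only [fun i => hy4 i, hCblock, hDblock, Fintype.sum_sum_type, Sum.elim_inl,
      Sum.elim_inr, Matrix.fromBlocks_apply₁₁, Matrix.fromBlocks_apply₂₂]
    rw [Finset.mul_sum, Finset.mul_sum]
    congr 1
    · exact Finset.sum_congr rfl fun a _ => by ring
    · refine Finset.sum_congr rfl fun b _ => ?_
      rw [show Sv * Zᵀ * C * (Z * Sv) = Sv * Zᵀ * C * Z * Sv from (Matrix.mul_assoc _ _ _).symm,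
        show Sv * Zᵀ * D * (Z * Sv) = Sv * Zᵀ * D * Z * Sv from (Matrix.mul_assoc _ _ _).symm]
      ring
  rw [htrA, htrB, htrAB, htrAB', hdiag]
  ring
end

section
/- Let Σ be a symmetric positive definite N×N matrix and W a symmetric N×N matrix with tr(W) ≠ 0. Then tr(WΣWΣ)·tr(Σ^{-2}) ≥ (tr(W))². -/
open Matrix
open scoped MatrixOrder

lemma cs_trace {N : ℕ} (A B : Matrix (Fin N) (Fin N) ℝ)
    (hA : A.IsSymm) (hB : B.IsSymm) :
    (A * B).trace ^ 2 ≤ (A * A).trace * (B * B).trace := by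
  have hAB : (A * B).trace = ∑ p : Fin N × Fin N, A p.1 p.2 * B p.1 p.2 := by
    rw [Matrix.trace, Fintype.sum_prod_type]
    refine Finset.sum_congr rfl fun i _ => ?_
    simp only [Matrix.diag_apply, Matrix.mul_apply]
    exact Finset.sum_congr rfl fun j _ => by rw [hB.apply]
  have hAA : (A * A).trace = ∑ p : Fin N × Fin N, A p.1 p.2 ^ 2 := by
    rw [Matrix.trace, Fintype.sum_prod_type]
    refine Finset.sum_congr rfl fun i _ => ?_
    simp only [Matrix.diag_apply, Matrix.mul_apply]
    exact Finset.sum_congr rfl fun j _ => by rw [hA.apply]; ring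
  have hBB : (B * B).trace = ∑ p : Fin N × Fin N, B p.1 p.2 ^ 2 := by
    rw [Matrix.trace, Fintype.sum_prod_type]
    refine Finset.sum_congr rfl fun i _ => ?_
    simp only [Matrix.diag_apply, Matrix.mul_apply]
    exact Finset.sum_congr rfl fun j _ => by rw [hB.apply]; ring
  rw [hAB, hAA, hBB]
  exact Finset.sum_mul_sq_le_sq_mul_sq _ _ _

/-- For a symmetric positive definite `N × N` matrix `Σ` and a symmetric
matrix `W` with `tr W ≠ 0`, one has `tr(WΣWΣ) · tr(Σ⁻²) ≥ (tr W)²`. -/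
theorem stmt5 {N : ℕ} (Sig W : Matrix (Fin N) (Fin N) ℝ)
    (hSig : Sig.PosDef) (hSigsymm : Sig.IsSymm) (hW : W.IsSymm)
    (htr : W.trace ≠ 0) :
    (W.trace) ^ 2 ≤ (W * Sig * W * Sig).trace * (Sig⁻¹ * Sig⁻¹).trace := by
  set S := CFC.sqrt Sig with hSdef
  have hSsymm : S.IsSymm := by
    have : S.IsHermitian := (CFC.sqrt_nonneg Sig).posSemidef.1
    exact (Matrix.conjTranspose_eq_transpose_of_trivial S).symm.trans this
  have hSS : S * S = Sig := CFC.sqrt_mul_sqrt_self Sig hSig.posSemidef.nonneg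
  have hdet : IsUnit Sig.det := isUnit_iff_ne_zero.mpr hSig.det_pos.ne'
  have hinv1 : Sig * Sig⁻¹ = 1 := Matrix.mul_nonsing_inv _ hdet
  have hinv2 : Sig⁻¹ * Sig = 1 := Matrix.nonsing_inv_mul _ hdet
  have hcomm : Sig⁻¹ * S = S * Sig⁻¹ := by
    have h1 : S * Sig = Sig * S := by rw [← hSS, mul_assoc]
    calc Sig⁻¹ * S = Sig⁻¹ * S * (Sig * Sig⁻¹) := by rw [hinv1, mul_one]
      _ = Sig⁻¹ * (S * Sig) * Sig⁻¹ := by simp only [mul_assoc]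
      _ = Sig⁻¹ * (Sig * S) * Sig⁻¹ := by rw [h1]
      _ = (Sig⁻¹ * Sig) * (S * Sig⁻¹) := by simp only [mul_assoc]
      _ = S * Sig⁻¹ := by rw [hinv2, one_mul]
  have hSiS : S * Sig⁻¹ * S = 1 := by
    calc S * Sig⁻¹ * S = S * (Sig⁻¹ * S) := by rw [mul_assoc]
      _ = S * (S * Sig⁻¹) := by rw [hcomm]
      _ = (S * S) * Sig⁻¹ := by rw [mul_assoc]
      _ = 1 := by rw [hSS, hinv1]
  have hSisymm : (Sig⁻¹).IsSymm := by
    rw [Matrix.IsSymm, Matrix.transpose_nonsing_inv, hSigsymm.eq]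
  have hAsymm : (S * W * S).IsSymm := by
    rw [Matrix.IsSymm, Matrix.transpose_mul, Matrix.transpose_mul, hSsymm.eq, hW.eq, mul_assoc]
  have key := cs_trace (S * W * S) Sig⁻¹ hAsymm hSisymm
  have e1 : (S * W * S * Sig⁻¹).trace = W.trace := by
    rw [show S * W * S * Sig⁻¹ = S * (W * S * Sig⁻¹) from by simp only [mul_assoc],
      Matrix.trace_mul_comm,
      show W * S * Sig⁻¹ * S = W * (S * Sig⁻¹ * S) from by simp only [mul_assoc],
      hSiS, mul_one]
  have e2 : (S * W * S * (S * W * S)).trace = (W * Sig * W * Sig).trace := by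
    rw [show S * W * S * (S * W * S) = S * (W * (S * S) * (W * S)) from by
        simp only [mul_assoc], hSS, Matrix.trace_mul_comm,
      show W * Sig * (W * S) * S = W * Sig * W * (S * S) from by simp only [mul_assoc], hSS]
  rw [e1, e2] at key
  exact key
end
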